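/- Let m and q both be odd, and consider α ∈ {0,…,q-1}^m. If every α satisfying Π_{i=1}^m (α_i + 1) < q^m - t also satisfies Π_{i=1}^m (q - α_i) ≥ q^m - t, then t ≥ q^m - q^{(m-1)/2}·(q+1)/2. -/
import Mathlib

lemma stmt15_key (k a b c : ℕ) :
    ∏ j ∈ Finset.range (2 * k + 1), (if j < k then a else if j = k then b else c)
      = a ^ k * b * c ^ k := by
  have h2 : 2 * k + 1 = k + (k + 1) := by omega
  rw [h2, Finset.prod_range_add]
  have h3 : ∏ i ∈ Finset.range k, (if i < k then a else if i = k then b else c) = a ^ k := by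
    rw [Finset.prod_congr rfl (fun i hi => by
      rw [if_pos (Finset.mem_range.mp hi)]), Finset.prod_const, Finset.card_range]
  have h4 : ∏ i ∈ Finset.range (k + 1),
      (if k + i < k then a else if k + i = k then b else c) = b * c ^ k := by
    rw [Finset.prod_range_succ']
    have h5 : ∏ i ∈ Finset.range k,
        (if k + (i + 1) < k then a else if k + (i + 1) = k then b else c) = c ^ k := by
      rw [Finset.prod_congr rfl (fun i hi => by
        rw [if_neg (by omega), if_neg (by omega)]), Finset.prod_const, Finset.card_range]
    rw [h5]
    simp [mul_comm]
  rw [h3, h4]; ring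

theorem stmt15 {q m t : ℕ} (hq : 3 ≤ q) (hqo : Odd q) (hm : Odd m) (ht : t ≤ q ^ m)
    (h : ∀ α : Fin m → ℕ, (∀ i, α i ≤ q - 1) →
      ∏ i, (α i + 1) < q ^ m - t → q ^ m - t ≤ ∏ i, (q - α i)) :
    q ^ m - q ^ ((m - 1) / 2) * ((q + 1) / 2) ≤ t := by
  obtain ⟨k, hk⟩ := hm
  obtain ⟨r, hr⟩ := hqo
  subst hk hr
  have hm1 : (2 * k + 1 - 1) / 2 = k := by omega
  have hq1 : (2 * r + 1 + 1) / 2 = r + 1 := by omega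
  rw [hm1, hq1]
  by_contra hc
  push_neg at hc
  set g : ℕ → ℕ := fun j => if j < k then 2 * r else if j = k then r else 0 with hg
  set α : Fin (2 * k + 1) → ℕ := fun i => g i.val with hα
  have hbd : ∀ i, α i ≤ 2 * r + 1 - 1 := by
    intro i
    simp only [hα, hg]
    split_ifs <;> omega
  have hP1 : ∏ i, (α i + 1) = (2 * r + 1) ^ k * (r + 1) := by
    rw [hα]
    rw [Fin.prod_univ_eq_prod_range (fun j => g j + 1)]
    rw [Finset.prod_congr rfl (fun j _ => show g j + 1 =
      (if j < k then 2 * r + 1 else if j = k then r + 1 else 1) by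
        simp only [hg]; split_ifs <;> rfl)]
    rw [stmt15_key]
    ring
  have hP2 : ∏ i, (2 * r + 1 - α i) = (2 * r + 1) ^ k * (r + 1) := by
    rw [hα]
    rw [Fin.prod_univ_eq_prod_range (fun j => 2 * r + 1 - g j)]
    rw [Finset.prod_congr rfl (fun j _ => show 2 * r + 1 - g j =
      (if j < k then 1 else if j = k then r + 1 else 2 * r + 1) by
        simp only [hg]; split_ifs <;> omega)]
    rw [stmt15_key]
    ring
  have hlt : ∏ i, (α i + 1) < (2 * r + 1) ^ (2 * k + 1) - t := by
    rw [hP1]; omega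
  have hle := h α hbd hlt
  rw [hP2] at hle
  omega
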